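/- arXiv:1609.03186 — 3 statements merged into one kernel-verified Lean document; each statement's English description precedes it below -/
import Mathlib

section
/- Fix real numbers y₁, y₂ and s. For t > s set Δ = t−s and define Q₂(x₁, x₂, t | y₁, y₂, s) = (2πΔ · √((Δ²+12)/12))^{−1} · exp{ −((2Δ²+6)/(Δ²+12)) · [ (x₁−y₁)²/Δ − 3(x₁−y₁)(x₂−y₂−y₁Δ)/(Δ²+3) + 3(x₂−y₂−y₁Δ)²/(Δ³+3Δ) ] }. Then for every t > s and all x₁, x₂ ∈ ℝ, the function p(t, x₁, x₂) = Q₂(x₁, x₂, t | y₁, y₂, s) satisfies the Fokker–Planck partial differential equation ∂p/∂t = −x₁ · ∂p/∂x₂ + (1/2) ∂²p/∂x₁² + (1/2) ∂²p/∂x₂². -/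
open Real

/-- The explicit Gaussian transition density `Q₂(x₁, x₂, t | y₁, y₂, s)` of the SDE system
`dX₁ = dB₁`, `dX₂ = X₁ dt + dB₂`, with `Δ = t − s`. -/
noncomputable def Q2 (x₁ x₂ t y₁ y₂ s : ℝ) : ℝ :=
  (2 * Real.pi * (t - s) * Real.sqrt (((t - s) ^ 2 + 12) / 12))⁻¹ *
    Real.exp (-((2 * (t - s) ^ 2 + 6) / ((t - s) ^ 2 + 12)) *
      ((x₁ - y₁) ^ 2 / (t - s)
        - 3 * (x₁ - y₁) * (x₂ - y₂ - y₁ * (t - s)) / ((t - s) ^ 2 + 3)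
        + 3 * (x₂ - y₂ - y₁ * (t - s)) ^ 2 / ((t - s) ^ 3 + 3 * (t - s))))

set_option maxHeartbeats 1000000 in
lemma FP_ht (x₁ x₂ y₁ y₂ s t : ℝ) (ht : s < t) :
    HasDerivAt (fun τ => Q2 x₁ x₂ τ y₁ y₂ s)
      (Q2 x₁ x₂ t y₁ y₂ s *
        ((-(1 / (t - s)) - (t - s) / ((t - s) ^ 2 + 12))
          + (-((4 * (t - s) * ((t - s) ^ 2 + 12) - (2 * (t - s) ^ 2 + 6) * (2 * (t - s)))
                / ((t - s) ^ 2 + 12) ^ 2)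
              * ((x₁ - y₁) ^ 2 / (t - s)
                  - 3 * (x₁ - y₁) * (x₂ - y₂ - y₁ * (t - s)) / ((t - s) ^ 2 + 3)
                  + 3 * (x₂ - y₂ - y₁ * (t - s)) ^ 2 / ((t - s) ^ 3 + 3 * (t - s)))
            + -((2 * (t - s) ^ 2 + 6) / ((t - s) ^ 2 + 12)) *
              ((0 * (t - s) - (x₁ - y₁) ^ 2 * 1) / (t - s) ^ 2
                - (3 * (x₁ - y₁) * (-(y₁ * 1)) * ((t - s) ^ 2 + 3)
                    - 3 * (x₁ - y₁) * (x₂ - y₂ - y₁ * (t - s)) * (2 * (t - s)))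
                    / ((t - s) ^ 2 + 3) ^ 2
                + (3 * (2 * (x₂ - y₂ - y₁ * (t - s)) * (-(y₁ * 1))) * ((t - s) ^ 3 + 3 * (t - s))
                    - 3 * (x₂ - y₂ - y₁ * (t - s)) ^ 2 * (3 * (t - s) ^ 2 + 3))
                    / ((t - s) ^ 3 + 3 * (t - s)) ^ 2)))) t := by
  have hΔ : (0:ℝ) < t - s := sub_pos.2 ht
  have hΔ0 : (t - s : ℝ) ≠ 0 := ne_of_gt hΔ
  have hP : ((t - s) ^ 2 + 3 : ℝ) ≠ 0 := by positivity
  have hR : ((t - s) ^ 2 + 12 : ℝ) ≠ 0 := by positivity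
  have hQpos : (0:ℝ) < (t - s) ^ 3 + 3 * (t - s) := by nlinarith [pow_pos hΔ 3]
  have hQ : ((t - s) ^ 3 + 3 * (t - s) : ℝ) ≠ 0 := ne_of_gt hQpos
  have hd : HasDerivAt (fun τ : ℝ => τ - s) 1 t := (hasDerivAt_id t).sub_const s
  have hi : HasDerivAt (fun τ : ℝ => ((τ - s) ^ 2 + 12) / 12) (2 * (t - s) / 12) t := by
    refine (((hd.pow 2).add_const 12).div_const 12).congr_deriv ?_
    push_cast; ring
  have hit : (((t - s) ^ 2 + 12) / 12 : ℝ) ≠ 0 := by positivity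
  have hs : HasDerivAt (fun τ : ℝ => Real.sqrt (((τ - s) ^ 2 + 12) / 12))
      (1 / (2 * Real.sqrt (((t - s) ^ 2 + 12) / 12)) * (2 * (t - s) / 12)) t :=
    (Real.hasDerivAt_sqrt hit).comp t hi
  have hSpos : 0 < Real.sqrt (((t - s) ^ 2 + 12) / 12) := Real.sqrt_pos.2 (by positivity)
  have hdenne : 2 * Real.pi * (t - s) * Real.sqrt (((t - s) ^ 2 + 12) / 12) ≠ 0 :=
    ne_of_gt (mul_pos (mul_pos (mul_pos two_pos Real.pi_pos) hΔ) hSpos)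
  have hKd : HasDerivAt
      (fun τ : ℝ => (2 * Real.pi * (τ - s) * Real.sqrt (((τ - s) ^ 2 + 12) / 12))⁻¹)
      ((2 * Real.pi * (t - s) * Real.sqrt (((t - s) ^ 2 + 12) / 12))⁻¹ *
        (-(1 / (t - s)) - (t - s) / ((t - s) ^ 2 + 12))) t := by
    have h := ((hd.const_mul (2 * Real.pi)).mul hs).inv hdenne
    refine h.congr_deriv ?_
    simp only [Pi.mul_apply]
    have hS2 : 12 * Real.sqrt (((t - s) ^ 2 + 12) / 12) ^ 2 = (t - s) ^ 2 + 12 := by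
      rw [Real.sq_sqrt (by positivity)]; ring
    set S := Real.sqrt (((t - s) ^ 2 + 12) / 12) with hSdef
    have hSne : S ≠ 0 := ne_of_gt hSpos
    rw [← hS2]
    field_simp
    ring
  have hC := (((hd.pow 2).const_mul 2).add_const 6).div ((hd.pow 2).add_const 12) hR
  have hu : HasDerivAt (fun τ : ℝ => x₂ - y₂ - y₁ * (τ - s)) (-(y₁ * 1)) t :=
    (hd.const_mul y₁).const_sub (x₂ - y₂)
  have h1 := (hasDerivAt_const t ((x₁ - y₁) ^ 2)).div hd hΔ0
  have h2 := (hu.const_mul (3 * (x₁ - y₁))).div ((hd.pow 2).add_const 3) hP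
  have h3 := ((hu.pow 2).const_mul 3).div ((hd.pow 3).add (hd.const_mul 3)) hQ
  have hE := (hC.neg).mul ((h1.sub h2).add h3)
  have h := hKd.mul hE.exp
  simp only [Q2]
  refine h.congr_deriv ?_
  simp only [Pi.mul_apply, Pi.div_apply, Pi.add_apply, Pi.sub_apply, Pi.neg_apply, Pi.pow_apply]
  beta_reduce
  push_cast
  ring

lemma FP_hx2 (x₁ t y₁ y₂ s ξ : ℝ) :
    HasDerivAt (fun x => Q2 x₁ x t y₁ y₂ s)
      (Q2 x₁ ξ t y₁ y₂ s *
        (-((2 * (t - s) ^ 2 + 6) / ((t - s) ^ 2 + 12)) *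
          (-(3 * (x₁ - y₁)) / ((t - s) ^ 2 + 3)
            + 6 * (ξ - y₂ - y₁ * (t - s)) / ((t - s) ^ 3 + 3 * (t - s))))) ξ := by
  have hu : HasDerivAt (fun x : ℝ => x - y₂ - y₁ * (t - s)) 1 ξ := by
    simpa using ((hasDerivAt_id ξ).sub_const y₂).sub_const (y₁ * (t - s))
  have h1 : HasDerivAt (fun _ : ℝ => (x₁ - y₁) ^ 2 / (t - s)) 0 ξ := hasDerivAt_const _ _
  have h2 := (hu.const_mul (3 * (x₁ - y₁))).div_const ((t - s) ^ 2 + 3)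
  have h3 := ((hu.pow 2).const_mul 3).div_const ((t - s) ^ 3 + 3 * (t - s))
  have hE := ((h1.sub h2).add h3).const_mul
    (-((2 * (t - s) ^ 2 + 6) / ((t - s) ^ 2 + 12)))
  have h := (hE.exp).const_mul
    ((2 * Real.pi * (t - s) * Real.sqrt (((t - s) ^ 2 + 12) / 12))⁻¹)
  simp only [Q2]
  refine h.congr_deriv ?_
  simp only [Pi.mul_apply, Pi.div_apply, Pi.add_apply, Pi.sub_apply, Pi.neg_apply, Pi.pow_apply]
  push_cast
  ring

lemma FP_hx2'' (x₁ x₂ t y₁ y₂ s : ℝ) :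
    iteratedDeriv 2 (fun x => Q2 x₁ x t y₁ y₂ s) x₂
      = Q2 x₁ x₂ t y₁ y₂ s *
        ((-((2 * (t - s) ^ 2 + 6) / ((t - s) ^ 2 + 12)) *
          (-(3 * (x₁ - y₁)) / ((t - s) ^ 2 + 3)
            + 6 * (x₂ - y₂ - y₁ * (t - s)) / ((t - s) ^ 3 + 3 * (t - s)))) ^ 2
          + -((2 * (t - s) ^ 2 + 6) / ((t - s) ^ 2 + 12)) *
              (6 / ((t - s) ^ 3 + 3 * (t - s)))) := by
  have hd : deriv (fun x => Q2 x₁ x t y₁ y₂ s)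
      = fun x => Q2 x₁ x t y₁ y₂ s *
        (-((2 * (t - s) ^ 2 + 6) / ((t - s) ^ 2 + 12)) *
          (-(3 * (x₁ - y₁)) / ((t - s) ^ 2 + 3)
            + 6 * (x - y₂ - y₁ * (t - s)) / ((t - s) ^ 3 + 3 * (t - s)))) :=
    funext fun ξ => (FP_hx2 x₁ t y₁ y₂ s ξ).deriv
  have hu : HasDerivAt (fun x : ℝ => x - y₂ - y₁ * (t - s)) 1 x₂ := by
    simpa using ((hasDerivAt_id x₂).sub_const y₂).sub_const (y₁ * (t - s))
  have hg : HasDerivAt (fun x : ℝ =>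
      -((2 * (t - s) ^ 2 + 6) / ((t - s) ^ 2 + 12)) *
        (-(3 * (x₁ - y₁)) / ((t - s) ^ 2 + 3)
          + 6 * (x - y₂ - y₁ * (t - s)) / ((t - s) ^ 3 + 3 * (t - s))))
      (-((2 * (t - s) ^ 2 + 6) / ((t - s) ^ 2 + 12)) *
        (6 / ((t - s) ^ 3 + 3 * (t - s)))) x₂ := by
    have := (((hu.const_mul 6).div_const ((t - s) ^ 3 + 3 * (t - s))).const_add
      (-(3 * (x₁ - y₁)) / ((t - s) ^ 2 + 3))).const_mul
      (-((2 * (t - s) ^ 2 + 6) / ((t - s) ^ 2 + 12)))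
    refine this.congr_deriv ?_
    ring
  have h := ((FP_hx2 x₁ t y₁ y₂ s x₂).mul hg).deriv
  rw [iteratedDeriv_succ, iteratedDeriv_one, hd]
  exact h.trans (by ring)

lemma FP_hx1 (x₂ t y₁ y₂ s ξ : ℝ) :
    HasDerivAt (fun x => Q2 x x₂ t y₁ y₂ s)
      (Q2 ξ x₂ t y₁ y₂ s *
        (-((2 * (t - s) ^ 2 + 6) / ((t - s) ^ 2 + 12)) *
          (2 * (ξ - y₁) / (t - s)
            - 3 * (x₂ - y₂ - y₁ * (t - s)) / ((t - s) ^ 2 + 3)))) ξ := by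
  have hv : HasDerivAt (fun x : ℝ => x - y₁) 1 ξ := (hasDerivAt_id ξ).sub_const y₁
  have h1 := (hv.pow 2).div_const (t - s)
  have h2 := ((hv.const_mul 3).mul_const (x₂ - y₂ - y₁ * (t - s))).div_const ((t - s) ^ 2 + 3)
  have hE := ((h1.sub h2).add_const
      (3 * (x₂ - y₂ - y₁ * (t - s)) ^ 2 / ((t - s) ^ 3 + 3 * (t - s)))).const_mul
    (-((2 * (t - s) ^ 2 + 6) / ((t - s) ^ 2 + 12)))
  have h := (hE.exp).const_mul
    ((2 * Real.pi * (t - s) * Real.sqrt (((t - s) ^ 2 + 12) / 12))⁻¹)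
  simp only [Q2]
  refine h.congr_deriv ?_
  simp only [Pi.mul_apply, Pi.div_apply, Pi.add_apply, Pi.sub_apply, Pi.neg_apply, Pi.pow_apply]
  push_cast
  ring

lemma FP_hx1'' (x₁ x₂ t y₁ y₂ s : ℝ) :
    iteratedDeriv 2 (fun x => Q2 x x₂ t y₁ y₂ s) x₁
      = Q2 x₁ x₂ t y₁ y₂ s *
        ((-((2 * (t - s) ^ 2 + 6) / ((t - s) ^ 2 + 12)) *
          (2 * (x₁ - y₁) / (t - s)
            - 3 * (x₂ - y₂ - y₁ * (t - s)) / ((t - s) ^ 2 + 3))) ^ 2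
          + -((2 * (t - s) ^ 2 + 6) / ((t - s) ^ 2 + 12)) * (2 / (t - s))) := by
  have hd : deriv (fun x => Q2 x x₂ t y₁ y₂ s)
      = fun x => Q2 x x₂ t y₁ y₂ s *
        (-((2 * (t - s) ^ 2 + 6) / ((t - s) ^ 2 + 12)) *
          (2 * (x - y₁) / (t - s)
            - 3 * (x₂ - y₂ - y₁ * (t - s)) / ((t - s) ^ 2 + 3))) :=
    funext fun ξ => (FP_hx1 x₂ t y₁ y₂ s ξ).deriv
  have hv : HasDerivAt (fun x : ℝ => x - y₁) 1 x₁ := (hasDerivAt_id x₁).sub_const y₁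
  have hg : HasDerivAt (fun x : ℝ =>
      -((2 * (t - s) ^ 2 + 6) / ((t - s) ^ 2 + 12)) *
        (2 * (x - y₁) / (t - s)
          - 3 * (x₂ - y₂ - y₁ * (t - s)) / ((t - s) ^ 2 + 3)))
      (-((2 * (t - s) ^ 2 + 6) / ((t - s) ^ 2 + 12)) * (2 / (t - s))) x₁ := by
    have := (((hv.const_mul 2).div_const (t - s)).sub_const
      (3 * (x₂ - y₂ - y₁ * (t - s)) / ((t - s) ^ 2 + 3))).const_mul
      (-((2 * (t - s) ^ 2 + 6) / ((t - s) ^ 2 + 12)))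
    refine this.congr_deriv ?_
    ring
  have h := ((FP_hx1 x₂ t y₁ y₂ s x₁).mul hg).deriv
  rw [iteratedDeriv_succ, iteratedDeriv_one, hd]
  exact h.trans (by ring)


set_option maxHeartbeats 4000000 in
lemma FP_key (d a u y₁ x₁ : ℝ) (hd : d ≠ 0) (hP : d ^ 2 + 3 ≠ 0)
    (hR : d ^ 2 + 12 ≠ 0) (hQ : d ^ 3 + 3 * d ≠ 0) (hx : x₁ = a + y₁) :
      ((-(1 / d) - d / (d ^ 2 + 12))
          + (-((4 * d * (d ^ 2 + 12) - (2 * d ^ 2 + 6) * (2 * d))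
                / (d ^ 2 + 12) ^ 2)
              * (a ^ 2 / d
                  - 3 * a * u / (d ^ 2 + 3)
                  + 3 * u ^ 2 / (d ^ 3 + 3 * d))
            + -((2 * d ^ 2 + 6) / (d ^ 2 + 12)) *
              ((0 * d - a ^ 2 * 1) / d ^ 2
                - (3 * a * (-(y₁ * 1)) * (d ^ 2 + 3)
                    - 3 * a * u * (2 * d))
                    / (d ^ 2 + 3) ^ 2
                + (3 * (2 * u * (-(y₁ * 1))) * (d ^ 3 + 3 * d)
                    - 3 * u ^ 2 * (3 * d ^ 2 + 3))
                    / (d ^ 3 + 3 * d) ^ 2)))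
        = -x₁ *
            (-((2 * d ^ 2 + 6) / (d ^ 2 + 12)) *
              (-(3 * a) / (d ^ 2 + 3)
                + 6 * u / (d ^ 3 + 3 * d)))
          + (1 / 2) *
            ((-((2 * d ^ 2 + 6) / (d ^ 2 + 12)) *
              (2 * a / d
                - 3 * u / (d ^ 2 + 3))) ^ 2
              + -((2 * d ^ 2 + 6) / (d ^ 2 + 12)) * (2 / d))
          + (1 / 2) *
            ((-((2 * d ^ 2 + 6) / (d ^ 2 + 12)) *
              (-(3 * a) / (d ^ 2 + 3)
                + 6 * u / (d ^ 3 + 3 * d))) ^ 2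
              + -((2 * d ^ 2 + 6) / (d ^ 2 + 12)) *
                  (6 / (d ^ 3 + 3 * d)))  := by
  subst hx
  field_simp
  ring


set_option maxHeartbeats 2000000 in
/-- For `t > s`, the density `p(t, x₁, x₂) = Q₂(x₁, x₂, t | y₁, y₂, s)` satisfies the
Fokker–Planck equation `∂p/∂t = −x₁ ∂p/∂x₂ + (1/2) ∂²p/∂x₁² + (1/2) ∂²p/∂x₂²`. -/
theorem Q2_satisfies_fokker_planck (y₁ y₂ s : ℝ) (t : ℝ) (ht : s < t) (x₁ x₂ : ℝ) :
    deriv (fun τ => Q2 x₁ x₂ τ y₁ y₂ s) t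
      = -x₁ * deriv (fun ξ => Q2 x₁ ξ t y₁ y₂ s) x₂
        + (1 / 2) * iteratedDeriv 2 (fun ξ => Q2 ξ x₂ t y₁ y₂ s) x₁
        + (1 / 2) * iteratedDeriv 2 (fun ξ => Q2 x₁ ξ t y₁ y₂ s) x₂ := by
  have hΔ : (0:ℝ) < t - s := sub_pos.2 ht
  have hΔ0 : (t - s : ℝ) ≠ 0 := ne_of_gt hΔ
  have hP : ((t - s) ^ 2 + 3 : ℝ) ≠ 0 := by positivity
  have hR : ((t - s) ^ 2 + 12 : ℝ) ≠ 0 := by positivity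
  have hQ : ((t - s) ^ 3 + 3 * (t - s) : ℝ) ≠ 0 :=
    ne_of_gt (by nlinarith [pow_pos hΔ 3])
  rw [(FP_ht x₁ x₂ y₁ y₂ s t ht).deriv, (FP_hx2 x₁ t y₁ y₂ s x₂).deriv,
    FP_hx1'', FP_hx2'']
  have key := FP_key (t - s) (x₁ - y₁) (x₂ - y₂ - y₁ * (t - s)) y₁ x₁
    hΔ0 hP hR hQ (by ring)
  linear_combination (Q2 x₁ x₂ t y₁ y₂ s) * key
end

section
/- Let (Ω, F, μ) be a probability space, let a, b, c be natural numbers, and let X: Ω → ℝ^a, Y: Ω → ℝ^b, Z: Ω → ℝ^c be measurable maps. Suppose the law of the triple (X, Y, Z) on ℝ^a × ℝ^b × ℝ^c is absolutely continuous with respect to Lebesgue measure with density of the product (Markov) form p(x, y, z) = q₁(x, y) · q₂(y, z), where q₁: ℝ^a × ℝ^b → [0, ∞) and q₂: ℝ^b × ℝ^c → [0, ∞) are measurable, q₂ is strictly positive, and r(y) := ∫_{ℝ^c} q₂(y, z) dz satisfies 0 < r(y) < ∞ for every y. Then for every bounded measurable g: ℝ^c → ℝ, the conditional expectation of g(Z)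 given the σ-algebra generated by (X, Y) is μ-almost surely equal to the function ω ↦ (∫_{ℝ^c} g(z) q₂(Y(ω), z) dz) / r(Y(ω)). In particular E[g(Z) | σ(X, Y)] = E[g(Z) | σ(Y)] almost surely: conditionally on Y, Z is independent of X. -/
open MeasureTheory
open scoped ENNReal NNReal

/-- Density-level Markov property: if the joint law of `(X, Y, Z)` has Lebesgue density of the
product form `q₁(x, y) q₂(y, z)`, with `q₂ > 0` and `0 < ∫ q₂(y, z) dz < ∞` for every `y`, then
for every bounded measurable `g` the conditional expectation of `g(Z)` given `σ(X, Y)` equals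
`ω ↦ (∫ g(z) q₂(Y ω, z) dz) / ∫ q₂(Y ω, z) dz` a.s.; in particular
`E[g(Z) | σ(X, Y)] = E[g(Z) | σ(Y)]` a.s. -/
theorem markov_conditional_expectation
    {Ω : Type*} [MeasurableSpace Ω] (μ : Measure Ω) [IsProbabilityMeasure μ]
    (a b c : ℕ)
    (X : Ω → (Fin a → ℝ)) (Y : Ω → (Fin b → ℝ)) (Z : Ω → (Fin c → ℝ))
    (hX : Measurable X) (hY : Measurable Y) (hZ : Measurable Z)
    (q₁ : (Fin a → ℝ) → (Fin b → ℝ) → ℝ) (q₂ : (Fin b → ℝ) → (Fin c → ℝ) → ℝ)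
    (hq₁meas : Measurable fun p : (Fin a → ℝ) × (Fin b → ℝ) => q₁ p.1 p.2)
    (hq₂meas : Measurable fun p : (Fin b → ℝ) × (Fin c → ℝ) => q₂ p.1 p.2)
    (hq₁nonneg : ∀ x y, 0 ≤ q₁ x y)
    (hq₂pos : ∀ y z, 0 < q₂ y z)
    (hq₂int : ∀ y, Integrable (q₂ y))
    (hrpos : ∀ y, 0 < ∫ z, q₂ y z)
    (hlaw : Measure.map (fun ω => (X ω, Y ω, Z ω)) μ
      = volume.withDensity fun w => ENNReal.ofReal (q₁ w.1 w.2.1 * q₂ w.2.1 w.2.2))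
    (g : (Fin c → ℝ) → ℝ) (hg : Measurable g) (hgb : ∃ C, ∀ z, |g z| ≤ C) :
    (μ[(fun ω => g (Z ω)) | MeasurableSpace.comap (fun ω => (X ω, Y ω)) inferInstance]
        =ᵐ[μ] fun ω => (∫ z, g z * q₂ (Y ω) z) / ∫ z, q₂ (Y ω) z)
      ∧ μ[(fun ω => g (Z ω)) | MeasurableSpace.comap (fun ω => (X ω, Y ω)) inferInstance]
        =ᵐ[μ] μ[(fun ω => g (Z ω)) | MeasurableSpace.comap Y inferInstance] := by
  obtain ⟨C, hC⟩ := hgb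
  have hC0 : 0 ≤ C := le_trans (abs_nonneg _) (hC 0)
  set T : Ω → (Fin a → ℝ) × (Fin b → ℝ) × (Fin c → ℝ) := fun ω => (X ω, Y ω, Z ω) with hTdef
  have hTmeas : Measurable T := hX.prodMk (hY.prodMk hZ)
  set p : (Fin a → ℝ) × (Fin b → ℝ) × (Fin c → ℝ) → ℝ :=
    fun w => q₁ w.1 w.2.1 * q₂ w.2.1 w.2.2 with hpdef
  have hpmeas : Measurable p :=
    (hq₁meas.comp (measurable_fst.prodMk measurable_snd.fst)).mul
      (hq₂meas.comp measurable_snd)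
  have hpnonneg : ∀ w, 0 ≤ p w := fun w =>
    mul_nonneg (hq₁nonneg _ _) (hq₂pos _ _).le
  -- the candidate conditional expectation
  set r : (Fin b → ℝ) → ℝ := fun y => ∫ z, q₂ y z with hrdef
  set I : (Fin b → ℝ) → ℝ := fun y => ∫ z, g z * q₂ y z with hIdef
  set h' : (Fin b → ℝ) → ℝ := fun y => I y / r y with hh'def
  have hImeas : Measurable I := by
    have : Measurable fun w : (Fin b → ℝ) × (Fin c → ℝ) => g w.2 * q₂ w.1 w.2 :=
      (hg.comp measurable_snd).mul hq₂meas
    exact this.stronglyMeasurable.integral_prod_right'.measurable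
  have hrmeas : Measurable r := hq₂meas.stronglyMeasurable.integral_prod_right'.measurable
  have hh'meas : Measurable h' := hImeas.div hrmeas
  -- integrability of z ↦ g z * q₂ y z
  have hgqint : ∀ y, Integrable (fun z => g z * q₂ y z) := fun y =>
    (hq₂int y).bdd_mul hg.aestronglyMeasurable (ae_of_all _ fun z => by simpa using hC z)
  -- bound on h'
  have hh'bdd : ∀ y, |h' y| ≤ C := by
    intro y
    have hIbdd : |I y| ≤ C * r y := by
      calc |I y| = ‖∫ z, g z * q₂ y z‖ := (Real.norm_eq_abs _).symm
        _ ≤ ∫ z, ‖g z * q₂ y z‖ := norm_integral_le_integral_norm _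
        _ = ∫ z, |g z * q₂ y z| := by simp [Real.norm_eq_abs, abs_mul]
        _ ≤ ∫ z, C * q₂ y z := by
            refine integral_mono (hgqint y).abs ((hq₂int y).const_mul C) fun z => ?_
            rw [abs_mul, abs_of_pos (hq₂pos y z)]
            exact mul_le_mul_of_nonneg_right (hC z) (hq₂pos y z).le
        _ = C * r y := integral_const_mul C _
    rw [hh'def, abs_div, abs_of_pos (hrpos y), div_le_iff₀ (hrpos y)]
    exact hIbdd
  -- mass of the density is 1
  haveI : IsProbabilityMeasure (Measure.map T μ) :=
    Measure.isProbabilityMeasure_map hTmeas.aemeasurable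
  have hmass : ∫⁻ w, ENNReal.ofReal (p w) = 1 := by
    have := (Measure.isProbabilityMeasure_map (μ := μ) hTmeas.aemeasurable).measure_univ
    rw [hlaw, withDensity_apply _ MeasurableSet.univ, Measure.restrict_univ] at this
    exact this
  have hpint : Integrable p := by
    refine ⟨hpmeas.aestronglyMeasurable, ?_⟩
    rw [hasFiniteIntegral_iff_ofReal (ae_of_all _ hpnonneg), hmass]
    exact ENNReal.one_lt_top
  -- transfer: integrals of F ∘ T against μ equal Lebesgue integrals against the density
  have transfer : ∀ F : (Fin a → ℝ) × (Fin b → ℝ) × (Fin c → ℝ) → ℝ, Measurable F →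
      ∫ ω, F (T ω) ∂μ = ∫ w, p w * F w := by
    intro F hF
    rw [← integral_map hTmeas.aemeasurable hF.aestronglyMeasurable, hlaw]
    have heq : (fun w => ENNReal.ofReal (p w))
        = fun w => ((fun w => (p w).toNNReal) w : ℝ≥0∞) := rfl
    have htoNN : Measurable fun w : (Fin a → ℝ) × (Fin b → ℝ) × (Fin c → ℝ) =>
        (p w).toNNReal := by exact measurable_real_toNNReal.comp hpmeas
    rw [heq, integral_withDensity_eq_integral_smul htoNN]
    congr 1
    funext w
    rw [NNReal.smul_def, smul_eq_mul, Real.coe_toNNReal _ (hpnonneg w)]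
  -- the main set-integral identity
  have main : ∀ A : Set ((Fin a → ℝ) × (Fin b → ℝ)), MeasurableSet A →
      ∫ ω in (fun ω => (X ω, Y ω)) ⁻¹' A, g (Z ω) ∂μ
        = ∫ ω in (fun ω => (X ω, Y ω)) ⁻¹' A, h' (Y ω) ∂μ := by
    intro A hA
    set F : (Fin a → ℝ) × (Fin b → ℝ) × (Fin c → ℝ) → ℝ :=
      fun w => A.indicator (fun _ => (1 : ℝ)) (w.1, w.2.1) * (g w.2.2 - h' w.2.1) with hFdef
    have hFmeas : Measurable F :=
      ((measurable_const.indicator hA).comp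
        (measurable_fst.prodMk measurable_snd.fst)).mul
        ((hg.comp measurable_snd.snd).sub (hh'meas.comp measurable_snd.fst))
    have hFbdd : ∀ w, |F w| ≤ 2 * C := by
      intro w
      rw [hFdef]
      simp only [abs_mul]
      have h1 : |A.indicator (fun _ => (1 : ℝ)) (w.1, w.2.1)| ≤ 1 := by
        by_cases hw : (w.1, w.2.1) ∈ A <;> simp [Set.indicator, hw]
      have h2 : |g w.2.2 - h' w.2.1| ≤ 2 * C := by
        calc |g w.2.2 - h' w.2.1| ≤ |g w.2.2| + |h' w.2.1| := abs_sub _ _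
          _ ≤ C + C := add_le_add (hC _) (hh'bdd _)
          _ = 2 * C := by ring
      calc |A.indicator (fun _ => (1:ℝ)) (w.1, w.2.1)| * |g w.2.2 - h' w.2.1|
          ≤ 1 * (2 * C) := mul_le_mul h1 h2 (abs_nonneg _) zero_le_one
        _ = 2 * C := one_mul _
    -- Step 2: the Lebesgue-side integral vanishes
    have hfint : Integrable (fun w => p w * F w) := by
      have := hpint.bdd_mul hFmeas.aestronglyMeasurable
        (ae_of_all _ fun w => by simpa using hFbdd w)
      simpa [mul_comm] using this
    have inner0 : ∀ x y, (∫ z, p (x, (y, z)) * F (x, (y, z))) = 0 := by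
      intro x y
      have hrw : (fun z => p (x, (y, z)) * F (x, (y, z)))
          = fun z => (q₁ x y * A.indicator (fun _ => (1:ℝ)) (x, y))
              * (q₂ y z * (g z - h' y)) := by
        funext z
        simp only [hpdef, hFdef]
        ring
      rw [hrw, integral_const_mul]
      have hsub : (∫ z, q₂ y z * (g z - h' y))
          = (∫ z, q₂ y z * g z) - (∫ z, q₂ y z * h' y) := by
        rw [← integral_sub]
        · congr 1; funext z; ring
        · have := hgqint y
          simpa [mul_comm] using this
        · exact (hq₂int y).mul_const _
      have h1 : (∫ z, q₂ y z * g z) = I y := by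
        rw [hIdef]; congr 1; funext z; ring
      have h2 : (∫ z, q₂ y z * h' y) = r y * h' y := integral_mul_const _ _
      rw [hsub, h1, h2, hh'def]
      have : r y * (I y / r y) = I y := by
        rw [mul_comm, div_mul_cancel₀ _ (hrpos y).ne']
      rw [this, sub_self, mul_zero]
    have hzero : (∫ w, p w * F w) = 0 := by
      rw [Measure.volume_eq_prod] at hfint ⊢
      rw [integral_prod _ hfint]
      have hae := hfint.prod_right_ae
      rw [← integral_zero (Fin a → ℝ) ℝ (μ := volume)]
      refine integral_congr_ae ?_
      filter_upwards [hae] with x hx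
      rw [Measure.volume_eq_prod] at hx ⊢
      rw [integral_prod _ hx]
      simp only [inner0]
      simp
    -- Step 1: relate to the set integrals
    have hS : MeasurableSet ((fun ω => (X ω, Y ω)) ⁻¹' A) := (hX.prodMk hY) hA
    have hgZint : Integrable (fun ω => g (Z ω)) μ :=
      (integrable_const C).mono' (hg.comp hZ).aestronglyMeasurable
        (ae_of_all _ fun ω => by simpa using hC (Z ω))
    have hhYint : Integrable (fun ω => h' (Y ω)) μ :=
      (integrable_const C).mono' (hh'meas.comp hY).aestronglyMeasurable
        (ae_of_all _ fun ω => by simpa using hh'bdd (Y ω))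
    have hind : (fun ω => F (T ω))
        = ((fun ω => (X ω, Y ω)) ⁻¹' A).indicator
            (fun ω => g (Z ω) - h' (Y ω)) := by
      funext ω
      by_cases hω : (X ω, Y ω) ∈ A
      · simp [hFdef, hTdef, Set.indicator_of_mem, hω]
      · simp [hFdef, hTdef, Set.indicator_of_notMem, hω]
    have := transfer F hFmeas
    rw [hzero, hind, integral_indicator hS, integral_sub hgZint.integrableOn
      hhYint.integrableOn] at this
    linarith [this]
  -- integrability facts (global)
  have hgZint : Integrable (fun ω => g (Z ω)) μ :=
    (integrable_const C).mono' (hg.comp hZ).aestronglyMeasurable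
      (ae_of_all _ fun ω => by simpa using hC (Z ω))
  have hhYint : Integrable (fun ω => h' (Y ω)) μ :=
    (integrable_const C).mono' (hh'meas.comp hY).aestronglyMeasurable
      (ae_of_all _ fun ω => by simpa using hh'bdd (Y ω))
  -- conditional expectation w.r.t. σ(X,Y)
  have hm : MeasurableSpace.comap (fun ω => (X ω, Y ω)) inferInstance ≤ _ :=
    (hX.prodMk hY).comap_le
  haveI : SigmaFinite (μ.trim hm) := by
    haveI : IsFiniteMeasure (μ.trim hm) := isFiniteMeasure_trim hm
    infer_instance
  have hXYmeas : Measurable[MeasurableSpace.comap (fun ω => (X ω, Y ω)) inferInstance]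
      (fun ω => (X ω, Y ω)) := measurable_iff_comap_le.mpr le_rfl
  have h1 : (fun ω => h' (Y ω)) =ᵐ[μ]
      μ[(fun ω => g (Z ω)) | MeasurableSpace.comap (fun ω => (X ω, Y ω)) inferInstance] := by
    refine ae_eq_condExp_of_forall_setIntegral_eq hm hgZint
      (fun s hs _ => hhYint.integrableOn) (fun s hs _ => ?_) ?_
    · obtain ⟨A, hA, rfl⟩ := hs
      exact (main A hA).symm
    · exact StronglyMeasurable.aestronglyMeasurable
        ((hh'meas.comp (measurable_snd.comp hXYmeas)).stronglyMeasurable)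
  -- conditional expectation w.r.t. σ(Y)
  have hmY : MeasurableSpace.comap Y inferInstance ≤ _ := hY.comap_le
  haveI : SigmaFinite (μ.trim hmY) := by
    haveI : IsFiniteMeasure (μ.trim hmY) := isFiniteMeasure_trim hmY
    infer_instance
  have hYmeas : Measurable[MeasurableSpace.comap Y inferInstance] Y :=
    measurable_iff_comap_le.mpr le_rfl
  have h2 : (fun ω => h' (Y ω)) =ᵐ[μ]
      μ[(fun ω => g (Z ω)) | MeasurableSpace.comap Y inferInstance] := by
    refine ae_eq_condExp_of_forall_setIntegral_eq hmY hgZint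
      (fun s hs _ => hhYint.integrableOn) (fun s hs _ => ?_) ?_
    · obtain ⟨B, hB, rfl⟩ := hs
      have hpre : Y ⁻¹' B = (fun ω => (X ω, Y ω)) ⁻¹' (Set.univ ×ˢ B) := by
        ext ω; simp
      rw [hpre]
      exact (main (Set.univ ×ˢ B) (MeasurableSet.univ.prod hB)).symm
    · exact StronglyMeasurable.aestronglyMeasurable
        ((hh'meas.comp hYmeas).stronglyMeasurable)
  exact ⟨h1.symm, h1.symm.trans h2⟩
end

section
/- Let (Ω, F, μ) be a probability space, let a, b, c be natural numbers, and let X: Ω → ℝ^a, Y: Ω → ℝ^b, Z: Ω → ℝ^c be measurable maps. Suppose the law of the triple (X, Y, Z) on ℝ^a × ℝ^b × ℝ^c is absolutely continuous with respect to Lebesgue measure with density of the product (Markov) form p(x, y, z) = q₁(x, y) · q₂(y, z), where q₁: ℝ^a × ℝ^b → (0, ∞) and q₂: ℝ^b × ℝ^c → (0, ∞) are measurable and strictly positive, and suppose that for all x ∈ ℝ^a, z ∈ ℝ^c the normalizing integral N(x, z) := ∫_{ℝ^b} q₁(x, y) q₂(y, z) dy satisfies 0 < N(x, z) < ∞. Then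 for every bounded measurable g: ℝ^b → ℝ, the conditional expectation of g(Y) given the σ-algebra generated by (X, Z) is μ-almost surely equal to the function ω ↦ (∫_{ℝ^b} g(y) q₁(X(ω), y) q₂(y, Z(ω)) dy) / N(X(ω), Z(ω)). That is, the conditional density of the intermediate value Y given the endpoint values X = x and Z = z is y ↦ q₁(x, y) q₂(y, z) / ∫ q₁(x, y′) q₂(y′, z) dy′. -/
open MeasureTheory
open scoped ENNReal NNReal

private lemma triple_integral_eq {a b c : ℕ}
    (f₁ f₂ : (Fin a → ℝ) × (Fin b → ℝ) × (Fin c → ℝ) → ℝ)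
    (h₁ : Integrable f₁) (h₂ : Integrable f₂)
    (h : ∀ x z, (∫ y, f₁ (x, y, z)) = ∫ y, f₂ (x, y, z)) :
    ∫ w, f₁ w = ∫ w, f₂ w := by
  rw [Measure.volume_eq_prod] at h₁ h₂
  rw [Measure.volume_eq_prod, integral_prod _ h₁, integral_prod _ h₂]
  refine integral_congr_ae ?_
  filter_upwards [h₁.prod_right_ae, h₂.prod_right_ae] with x hx₁ hx₂
  rw [Measure.volume_eq_prod] at hx₁ hx₂
  rw [Measure.volume_eq_prod, integral_prod_symm _ hx₁, integral_prod_symm _ hx₂]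
  exact integral_congr_ae (Filter.Eventually.of_forall fun z => h x z)

/-- Bridge-density formula: if the joint law of `(X, Y, Z)` has Lebesgue density of the product
(Markov) form `q₁(x, y) q₂(y, z)` with `q₁, q₂ > 0` and normalizing integral
`N(x, z) = ∫ q₁(x, y) q₂(y, z) dy` satisfying `0 < N(x, z) < ∞`, then for every bounded
measurable `g` the conditional expectation of `g(Y)` given `σ(X, Z)` equals
`ω ↦ (∫ g(y) q₁(X ω, y) q₂(y, Z ω) dy) / N(X ω, Z ω)` a.s.; i.e. the conditional density of
the intermediate value `Y` given the endpoints `X = x`, `Z = z` is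
`y ↦ q₁(x, y) q₂(y, z) / ∫ q₁(x, y′) q₂(y′, z) dy′`. -/
theorem bridge_conditional_expectation
    {Ω : Type*} [MeasurableSpace Ω] (μ : Measure Ω) [IsProbabilityMeasure μ]
    (a b c : ℕ)
    (X : Ω → (Fin a → ℝ)) (Y : Ω → (Fin b → ℝ)) (Z : Ω → (Fin c → ℝ))
    (hX : Measurable X) (hY : Measurable Y) (hZ : Measurable Z)
    (q₁ : (Fin a → ℝ) → (Fin b → ℝ) → ℝ) (q₂ : (Fin b → ℝ) → (Fin c → ℝ) → ℝ)
    (hq₁meas : Measurable fun p : (Fin a → ℝ) × (Fin b → ℝ) => q₁ p.1 p.2)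
    (hq₂meas : Measurable fun p : (Fin b → ℝ) × (Fin c → ℝ) => q₂ p.1 p.2)
    (hq₁pos : ∀ x y, 0 < q₁ x y)
    (hq₂pos : ∀ y z, 0 < q₂ y z)
    (hNint : ∀ x z, Integrable fun y => q₁ x y * q₂ y z)
    (hNpos : ∀ x z, 0 < ∫ y, q₁ x y * q₂ y z)
    (hlaw : Measure.map (fun ω => (X ω, Y ω, Z ω)) μ
      = volume.withDensity fun w => ENNReal.ofReal (q₁ w.1 w.2.1 * q₂ w.2.1 w.2.2))
    (g : (Fin b → ℝ) → ℝ) (hg : Measurable g) (hgb : ∃ C, ∀ y, |g y| ≤ C) :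
    μ[(fun ω => g (Y ω)) | MeasurableSpace.comap (fun ω => (X ω, Z ω)) inferInstance]
      =ᵐ[μ] fun ω =>
        (∫ y, g y * (q₁ (X ω) y * q₂ y (Z ω))) / ∫ y, q₁ (X ω) y * q₂ y (Z ω) := by
  classical
  obtain ⟨C₀, hC₀⟩ := hgb
  set C := max C₀ 0 with hCdef
  have hC : ∀ y, |g y| ≤ C := fun y => (hC₀ y).trans (le_max_left _ _)
  have hC0 : (0:ℝ) ≤ C := le_max_right _ _
  -- abbreviations
  let p : (Fin a → ℝ) × (Fin b → ℝ) × (Fin c → ℝ) → ℝ :=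
    fun w => q₁ w.1 w.2.1 * q₂ w.2.1 w.2.2
  let N : (Fin a → ℝ) × (Fin c → ℝ) → ℝ := fun t => ∫ y, q₁ t.1 y * q₂ y t.2
  let G : (Fin a → ℝ) × (Fin c → ℝ) → ℝ := fun t => ∫ y, g y * (q₁ t.1 y * q₂ y t.2)
  let F : (Fin a → ℝ) × (Fin c → ℝ) → ℝ := fun t => G t / N t
  have hppos : ∀ w, 0 < p w := fun w => mul_pos (hq₁pos _ _) (hq₂pos _ _)
  have hpmeas : Measurable p :=
    (hq₁meas.comp (measurable_fst.prodMk (measurable_fst.comp measurable_snd))).mul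
      (hq₂meas.comp measurable_snd)
  have hNmeas : Measurable N := by
    have : StronglyMeasurable fun r : ((Fin a → ℝ) × (Fin c → ℝ)) × (Fin b → ℝ) =>
        q₁ r.1.1 r.2 * q₂ r.2 r.1.2 :=
      ((hq₁meas.comp ((measurable_fst.comp measurable_fst).prodMk measurable_snd)).mul
        (hq₂meas.comp (measurable_snd.prodMk
          (measurable_snd.comp measurable_fst)))).stronglyMeasurable
    exact this.integral_prod_right'.measurable
  have hGmeas : Measurable G := by
    have : StronglyMeasurable fun r : ((Fin a → ℝ) × (Fin c → ℝ)) × (Fin b → ℝ) =>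
        g r.2 * (q₁ r.1.1 r.2 * q₂ r.2 r.1.2) :=
      ((hg.comp measurable_snd).mul
        ((hq₁meas.comp ((measurable_fst.comp measurable_fst).prodMk measurable_snd)).mul
          (hq₂meas.comp (measurable_snd.prodMk
            (measurable_snd.comp measurable_fst))))).stronglyMeasurable
    exact this.integral_prod_right'.measurable
  have hFmeas : Measurable F := hGmeas.div hNmeas
  have hGint : ∀ x z, Integrable fun y => g y * (q₁ x y * q₂ y z) := fun x z =>
    (hNint x z).bdd_mul hg.aestronglyMeasurable (c := C) (Filter.Eventually.of_forall fun y => by simpa using hC y)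
  have hGbound : ∀ t, |G t| ≤ C * N t := by
    intro t
    calc |G t| ≤ ∫ y, |g y * (q₁ t.1 y * q₂ y t.2)| :=
          by simpa only [Real.norm_eq_abs] using norm_integral_le_integral_norm (μ := volume) fun y => g y * (q₁ t.1 y * q₂ y t.2)
      _ ≤ ∫ y, C * (q₁ t.1 y * q₂ y t.2) := by
          refine integral_mono (hGint t.1 t.2).abs ((hNint t.1 t.2).const_mul C) fun y => ?_
          rw [abs_mul, abs_of_pos (mul_pos (hq₁pos _ _) (hq₂pos _ _))]
          exact mul_le_mul_of_nonneg_right (hC y) (mul_pos (hq₁pos _ _) (hq₂pos _ _)).le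
      _ = C * N t := integral_const_mul _ _
  have hFbound : ∀ t, |F t| ≤ C := by
    intro t
    rw [abs_div, abs_of_pos (hNpos t.1 t.2), div_le_iff₀ (hNpos t.1 t.2)]
    exact hGbound t
  -- the joint density is integrable
  have hTmeas : Measurable fun ω => (X ω, Y ω, Z ω) := hX.prodMk (hY.prodMk hZ)
  have hlaw' : Measure.map (fun ω => (X ω, Y ω, Z ω)) μ
      = volume.withDensity fun w => ENNReal.ofReal (p w) := hlaw
  have hp1 : (∫⁻ w, ENNReal.ofReal (p w)) = 1 := by
    have h1 : (Measure.map (fun ω => (X ω, Y ω, Z ω)) μ) Set.univ = 1 := by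
      rw [Measure.map_apply hTmeas MeasurableSet.univ]; simp
    rw [hlaw', withDensity_apply _ MeasurableSet.univ, setLIntegral_univ] at h1
    exact h1
  have hp_int : Integrable p := by
    refine ⟨hpmeas.aestronglyMeasurable, ?_⟩
    rw [hasFiniteIntegral_iff_ofReal (Filter.Eventually.of_forall fun w => (hppos w).le), hp1]
    exact ENNReal.one_lt_top
  -- transfer of integrals to the density
  have transfer : ∀ Φ : (Fin a → ℝ) × (Fin b → ℝ) × (Fin c → ℝ) → ℝ, Measurable Φ →
      ∫ ω, Φ (X ω, Y ω, Z ω) ∂μ = ∫ w, p w * Φ w := by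
    intro Φ hΦ
    rw [← integral_map hTmeas.aemeasurable hΦ.aestronglyMeasurable, hlaw']
    have hcast : (fun w => ENNReal.ofReal (p w))
        = fun w => ((p w).toNNReal : ℝ≥0∞) := rfl
    rw [hcast, integral_withDensity_eq_integral_smul hpmeas.real_toNNReal Φ]
    refine integral_congr_ae (Filter.Eventually.of_forall fun w => ?_)
    simp [NNReal.smul_def, Real.coe_toNNReal _ (hppos w).le]
  -- set up conditional expectation uniqueness
  have hm : MeasurableSpace.comap (fun ω => (X ω, Z ω)) inferInstance
      ≤ (inferInstance : MeasurableSpace Ω) :=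
    measurable_iff_comap_le.mp (hX.prodMk hZ)
  haveI : SigmaFinite (μ.trim hm) := by
    haveI := isFiniteMeasure_trim (μ := μ) hm
    infer_instance
  have hf_int : Integrable (fun ω => g (Y ω)) μ :=
    Integrable.mono' (integrable_const C) (hg.comp hY).aestronglyMeasurable
      (Filter.Eventually.of_forall fun ω => by simpa [Real.norm_eq_abs] using hC (Y ω))
  have hcand_meas₀ : Measurable[MeasurableSpace.comap (fun ω => (X ω, Z ω)) inferInstance]
      fun ω => F (X ω, Z ω) :=
    hFmeas.comp (Measurable.of_comap_le le_rfl)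
  have hcand_int : Integrable (fun ω => F (X ω, Z ω)) μ :=
    Integrable.mono' (integrable_const C)
      ((hFmeas.comp (hX.prodMk hZ)).aestronglyMeasurable)
      (Filter.Eventually.of_forall fun ω => by
        simpa [Real.norm_eq_abs] using hFbound (X ω, Z ω))
  refine Filter.EventuallyEq.symm
    (ae_eq_condExp_of_forall_setIntegral_eq hm hf_int
      (fun s _ _ => hcand_int.integrableOn) ?_
      (hcand_meas₀.stronglyMeasurable.aestronglyMeasurable))
  rintro s ⟨A, hA, rfl⟩ -
  -- the two test functions on the product space
  set ind : (Fin a → ℝ) × (Fin c → ℝ) → ℝ := Set.indicator A (fun _ => (1:ℝ)) with hinddef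
  have hindmeas : Measurable ind := measurable_const.indicator hA
  let Φ : (Fin a → ℝ) × (Fin b → ℝ) × (Fin c → ℝ) → ℝ :=
    fun w => ind (w.1, w.2.2) * g w.2.1
  let Ψ : (Fin a → ℝ) × (Fin b → ℝ) × (Fin c → ℝ) → ℝ :=
    fun w => ind (w.1, w.2.2) * F (w.1, w.2.2)
  have hΦmeas : Measurable Φ :=
    (hindmeas.comp (measurable_fst.prodMk (measurable_snd.comp measurable_snd))).mul
      (hg.comp (measurable_fst.comp measurable_snd))
  have hΨmeas : Measurable Ψ :=
    (hindmeas.comp (measurable_fst.prodMk (measurable_snd.comp measurable_snd))).mul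
      (hFmeas.comp (measurable_fst.prodMk (measurable_snd.comp measurable_snd)))
  have hind01 : ∀ t, |ind t| ≤ 1 := by
    intro t
    by_cases ht : t ∈ A <;> simp [hinddef, ht]
  have hsmeas : MeasurableSet ((fun ω => (X ω, Z ω)) ⁻¹' A) := (hX.prodMk hZ) hA
  -- rewrite both set integrals as integrals over the density
  have stepΨ : ∫ ω in (fun ω => (X ω, Z ω)) ⁻¹' A, F (X ω, Z ω) ∂μ = ∫ w, p w * Ψ w := by
    rw [← integral_indicator hsmeas, ← transfer Ψ hΨmeas]
    refine integral_congr_ae (Filter.Eventually.of_forall fun ω => ?_)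
    by_cases h : (X ω, Z ω) ∈ A <;>
      simp [Ψ, hinddef, Set.indicator, h]
  have stepΦ : ∫ ω in (fun ω => (X ω, Z ω)) ⁻¹' A, g (Y ω) ∂μ = ∫ w, p w * Φ w := by
    rw [← integral_indicator hsmeas, ← transfer Φ hΦmeas]
    refine integral_congr_ae (Filter.Eventually.of_forall fun ω => ?_)
    by_cases h : (X ω, Z ω) ∈ A <;>
      simp [Φ, hinddef, Set.indicator, h]
  have hpΨ_int : Integrable fun w => p w * Ψ w := by
    have : Integrable fun w => Ψ w * p w :=
      hp_int.bdd_mul hΨmeas.aestronglyMeasurable (c := C)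
        (Filter.Eventually.of_forall fun w => by
          rw [Real.norm_eq_abs]
          show |ind (w.1, w.2.2) * F (w.1, w.2.2)| ≤ C
          rw [abs_mul]
          calc |ind (w.1, w.2.2)| * |F (w.1, w.2.2)| ≤ 1 * C :=
                mul_le_mul (hind01 _) (hFbound _) (abs_nonneg _) zero_le_one
            _ = C := one_mul C)
    exact this.congr (Filter.Eventually.of_forall fun w => mul_comm _ _)
  have hpΦ_int : Integrable fun w => p w * Φ w := by
    have : Integrable fun w => Φ w * p w :=
      hp_int.bdd_mul hΦmeas.aestronglyMeasurable (c := C)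
        (Filter.Eventually.of_forall fun w => by
          rw [Real.norm_eq_abs]
          show |ind (w.1, w.2.2) * g w.2.1| ≤ C
          rw [abs_mul]
          calc |ind (w.1, w.2.2)| * |g w.2.1| ≤ 1 * C :=
                mul_le_mul (hind01 _) (hC _) (abs_nonneg _) zero_le_one
            _ = C := one_mul C)
    exact this.congr (Filter.Eventually.of_forall fun w => mul_comm _ _)
  rw [stepΨ, stepΦ]
  refine triple_integral_eq _ _ hpΨ_int hpΦ_int fun x z => ?_
  have e₁ : (∫ y, p (x, y, z) * Ψ (x, y, z)) = ind (x, z) * (F (x, z) * N (x, z)) := by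
    calc (∫ y, p (x, y, z) * Ψ (x, y, z))
        = ∫ y, (ind (x, z) * F (x, z)) * (q₁ x y * q₂ y z) := by
          refine integral_congr_ae (Filter.Eventually.of_forall fun y => ?_)
          simp only [Ψ, p]; ring
      _ = (ind (x, z) * F (x, z)) * ∫ y, q₁ x y * q₂ y z := integral_const_mul _ _
      _ = ind (x, z) * (F (x, z) * N (x, z)) := by rw [mul_assoc]
  have e₂ : (∫ y, p (x, y, z) * Φ (x, y, z)) = ind (x, z) * G (x, z) := by
    calc (∫ y, p (x, y, z) * Φ (x, y, z))
        = ∫ y, ind (x, z) * (g y * (q₁ x y * q₂ y z)) := by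
          refine integral_congr_ae (Filter.Eventually.of_forall fun y => ?_)
          simp only [Φ, p]; ring
      _ = ind (x, z) * ∫ y, g y * (q₁ x y * q₂ y z) := integral_const_mul _ _
      _ = ind (x, z) * G (x, z) := rfl
  rw [e₁, e₂, div_mul_cancel₀ _ (ne_of_gt (hNpos x z))]
end
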